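/- Let 1 ≤ i ≤ n−1 and let L be an ordered list of distinct elements of ±[n] with i ∉ L and i+1 ∉ L. Then for every w ∈ D_n, s_i·( h_{i, L}( s_i·w ) ) = h_{i+1, s_i(L)}(w), where · is the ordinary product. -/

import Mathlib

open Equiv

/-- The key of `a : ℤ` in the total order `1 < 2 < ⋯ < n < -n < ⋯ < -2 < -1` on `±[n]`:
elements of `±[n]` get the keys `1, …, 2n` (in order); anything else gets key `2n+1`. -/
def dkey (n : ℕ) (a : ℤ) : ℤ :=
  if 1 ≤ a ∧ a ≤ (n : ℤ) then a
  else if -(n : ℤ) ≤ a ∧ a ≤ -1 then 2 * n + 1 + a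
  else 2 * n + 1

/-- `a < b` in the total order `1 < 2 < ⋯ < n < -n < ⋯ < -2 < -1` on `±[n]`. -/
def dlt (n : ℕ) (a b : ℤ) : Prop := dkey n a < dkey n b

instance (n : ℕ) (a b : ℤ) : Decidable (dlt n a b) :=
  inferInstanceAs (Decidable (dkey n a < dkey n b))

/-- `a` is an element of `±[n] = {1,…,n} ∪ {-1,…,-n}`. -/
def inPM (n : ℕ) (a : ℤ) : Prop := a ≠ 0 ∧ |a| ≤ (n : ℤ)

instance (n : ℕ) (a : ℤ) : Decidable (inPM n a) :=
  inferInstanceAs (Decidable (a ≠ 0 ∧ |a| ≤ (n : ℤ)))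

/-- The element of `±[n]` whose key is `k` (for `1 ≤ k ≤ 2n`). -/
def ofKey (n : ℕ) (k : ℤ) : ℤ := if k ≤ (n : ℤ) then k else k - (2 * n + 1)

/-- A signed permutation of `±[n]`, viewed as a permutation of `ℤ`:
it commutes with negation and fixes everything outside `±[n]`. -/
def IsSignedPerm (n : ℕ) (w : Perm ℤ) : Prop :=
  (∀ a : ℤ, w (-a) = -(w a)) ∧ ∀ a : ℤ, (n : ℤ) < |a| → w a = a

/-- An even signed permutation of `±[n]`, i.e. an element of the group `D_n`. -/
def IsEvenSignedPerm (n : ℕ) (w : Perm ℤ) : Prop :=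
  IsSignedPerm n w ∧ Even ((Finset.Icc (1 : ℤ) (n : ℤ)).filter fun i => w i < 0).card

/-- The simple generators `s_1, …, s_n` of `D_n`:  for `1 ≤ i ≤ n-1`, `s_i` exchanges the
values `i ↔ i+1` and `-i ↔ -(i+1)`;  `s_n` exchanges the values `n-1 ↔ -n` and `n ↔ -(n-1)`. -/
def sgen (n i : ℕ) : Perm ℤ :=
  if i = n then Equiv.swap ((n : ℤ) - 1) (-(n : ℤ)) * Equiv.swap (n : ℤ) (-((n : ℤ) - 1))
  else Equiv.swap (i : ℤ) ((i : ℤ) + 1) * Equiv.swap (-(i : ℤ)) (-((i : ℤ) + 1))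

/-- The product `s_{l₁} s_{l₂} ⋯ s_{l_k}` of the word `l = [l₁, …, l_k]`. -/
def wordProd (n : ℕ) (l : List ℕ) : Perm ℤ := (l.map (sgen n)).prod

/-- The Coxeter length of `w ∈ D_n`: the least length of a word in `s_1, …, s_n` whose
product is `w`. -/
noncomputable def DLength (n : ℕ) (w : Perm ℤ) : ℕ :=
  sInf {k | ∃ l : List ℕ, (∀ i ∈ l, 1 ≤ i ∧ i ≤ n) ∧ l.length = k ∧ wordProd n l = w}

/-- `dem` is the Demazure product of the Coxeter group `D_n`: the (unique) associative
product on `D_n`, with identity `id`, such that for each simple generator `s` and `u ∈ D_n`,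
`s ⋆ u = s·u` if `ℓ(s·u) > ℓ(u)`, and `s ⋆ u = u` if `ℓ(s·u) < ℓ(u)`. -/
def IsDemazure (n : ℕ) (dem : Perm ℤ → Perm ℤ → Perm ℤ) : Prop :=
  (∀ u v, IsEvenSignedPerm n u → IsEvenSignedPerm n v → IsEvenSignedPerm n (dem u v)) ∧
  (∀ u v w, IsEvenSignedPerm n u → IsEvenSignedPerm n v → IsEvenSignedPerm n w →
      dem (dem u v) w = dem u (dem v w)) ∧
  (∀ u, IsEvenSignedPerm n u → dem 1 u = u ∧ dem u 1 = u) ∧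
  (∀ i, 1 ≤ i → i ≤ n → ∀ u, IsEvenSignedPerm n u →
      (DLength n u < DLength n (sgen n i * u) → dem (sgen n i) u = sgen n i * u) ∧
      (DLength n (sgen n i * u) < DLength n u → dem (sgen n i) u = u))

/-- The swap performed in one step of the hopping procedure: exchange the values `t ↔ q`
and simultaneously `-t ↔ -q` (unless `t = -q`). -/
def hswap (t q : ℤ) : Perm ℤ :=
  if t = -q then Equiv.swap t q else Equiv.swap t q * Equiv.swap (-t) (-q)

/-- `q` is eligible for hopping `t` in `w`: `q ∈ ±[n]`, `q > t` in the order on `±[n]`,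
and `q` occurs strictly to the right of `t` in the unfolding of `w`. -/
def HopStep (n : ℕ) (w : Perm ℤ) (t q : ℤ) : Prop :=
  inPM n q ∧ dlt n t q ∧ dkey n (w⁻¹ t) < dkey n (w⁻¹ q) ∧ dkey n (w⁻¹ q) ≤ 2 * n

instance (n : ℕ) (w : Perm ℤ) (t q : ℤ) : Decidable (HopStep n w t q) :=
  inferInstanceAs (Decidable
    (inPM n q ∧ dlt n t q ∧ dkey n (w⁻¹ t) < dkey n (w⁻¹ q) ∧ dkey n (w⁻¹ q) ≤ 2 * n))

theorem hop_measure (n : ℕ) (w : Perm ℤ) (t q : ℤ) (h : HopStep n w t q) :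
    (2 * (n : ℤ) + 1 - dkey n ((hswap t q * w)⁻¹ t)).toNat
      < (2 * (n : ℤ) + 1 - dkey n (w⁻¹ t)).toNat := by
  obtain ⟨⟨hq0, _⟩, _, hlt, hle⟩ := h
  have key : (hswap t q * w)⁻¹ t = w⁻¹ q := by
    have hs : (hswap t q)⁻¹ t = q := by
      unfold hswap
      split_ifs with he
      · subst he
        simp [Equiv.swap_inv, Equiv.swap_apply_left]
      · have h1 : q ≠ -t := fun hc => he (by omega)
        have h2 : q ≠ -q := fun hc => hq0 (by omega)
        simp [mul_inv_rev, Equiv.swap_inv, Equiv.Perm.mul_apply, Equiv.swap_apply_left,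
          Equiv.swap_apply_of_ne_of_ne h1 h2]
    rw [mul_inv_rev, Equiv.Perm.mul_apply, hs]
  rw [key]
  omega

/-- The hopping operator `h_{t,L}`: repeatedly pick the element `q` of `L`, occurring
latest in `L`, among those greater than `t` occurring strictly to the right of `t` in
the unfolding of `w`; swap the values `t ↔ q` (and `-t ↔ -q`, unless `t = -q`); stop
when no such `q` exists. -/
def hop (n : ℕ) (t : ℤ) (L : List ℤ) (w : Perm ℤ) : Perm ℤ :=
  match h : L.reverse.find? (fun q => decide (HopStep n w t q)) with
  | none => w
  | some q => hop n t L (hswap t q * w)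
termination_by (2 * (n : ℤ) + 1 - dkey n (w⁻¹ t)).toNat
decreasing_by
  have hq := List.find?_some h
  simp only [decide_eq_true_eq] at hq
  exact hop_measure n w t q hq

/-- The unfolding `[w(1), …, w(n), -w(n), …, -w(1)]` of a signed permutation `w`. -/
def unfoldList (n : ℕ) (w : Perm ℤ) : List ℤ :=
  (List.range (2 * n)).map fun p => w (ofKey n ((p : ℤ) + 1))

/-- `w ↖ t`: the ordered list of entries of the unfolding of `w` occurring strictly to the
left of the value `t` and lying strictly between `t` and `-t` in the order on `±[n]`. -/
def liftD (n : ℕ) (w : Perm ℤ) (t : ℤ) : List ℤ :=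
  ((unfoldList n w).take (dkey n (w⁻¹ t) - 1).toNat).filter
    fun a => decide (dlt n t a ∧ dlt n a (-t))

/-- `L ∼ₜ L'` : the hopping operators `h_{t,L}` and `h_{t,L'}` agree on all of `D_n`. -/
def HopEquiv (n : ℕ) (t : ℤ) (L L' : List ℤ) : Prop :=
  ∀ u : Perm ℤ, IsEvenSignedPerm n u → hop n t L u = hop n t L' u

/-- The list `[a, a+1, …, b]` (as integers). -/
def listUp (a b : ℕ) : List ℤ := (List.range (b + 1 - a)).map fun k => (a : ℤ) + k

/-- The list `[-b, -(b-1), …, -a]` (as integers). -/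
def listNegUp (a b : ℕ) : List ℤ := (List.range (b + 1 - a)).map fun k => -(b : ℤ) + k

/-- For `1 ≤ i ≤ n-2` : `Q` is one of the minimal coset representatives
(form 0: `id`; form 1: `s_i ⋯ s_j`; form 2: `s_i ⋯ s_{n-2} s_n s_{n-1} ⋯ s_j`;
form 3: `s_i ⋯ s_{n-2} s_n`). -/
def QForm (n i : ℕ) (Q : Perm ℤ) : Prop :=
  Q = 1 ∨
  (∃ j, i ≤ j ∧ j ≤ n - 1 ∧ Q = wordProd n (List.range' i (j + 1 - i))) ∨
  (∃ j, i ≤ j ∧ j ≤ n - 1 ∧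
    Q = wordProd n (List.range' i (n - 1 - i) ++ [n] ++ (List.range' j (n - j)).reverse)) ∨
  Q = wordProd n (List.range' i (n - 1 - i) ++ [n])

/-- `Q` is one of the four elements `id`, `s_{n-1}`, `s_n s_{n-1}`, `s_n` of
`W_{{s_{n-1}, s_n}}`. -/
def QFormTop (n : ℕ) (Q : Perm ℤ) : Prop :=
  Q = 1 ∨ Q = sgen n (n - 1) ∨ Q = sgen n n * sgen n (n - 1) ∨ Q = sgen n n

/-- For `1 ≤ i ≤ n-2`: `(Q, L)` is a factor of a parabolic factorization together with
its associated list `L_i`. -/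
def QList (n i : ℕ) (Q : Perm ℤ) (L : List ℤ) : Prop :=
  (Q = 1 ∧ L = []) ∨
  (∃ j, i ≤ j ∧ j ≤ n - 1 ∧ Q = wordProd n (List.range' i (j + 1 - i)) ∧
    L = listUp (i + 1) (j + 1)) ∨
  (∃ j, i ≤ j ∧ j ≤ n - 1 ∧
    Q = wordProd n (List.range' i (n - 1 - i) ++ [n] ++ (List.range' j (n - j)).reverse) ∧
    L = listUp (i + 1) n ++ listNegUp (j + 1) n) ∨
  (Q = wordProd n (List.range' i (n - 1 - i) ++ [n]) ∧
    L = listUp (i + 1) (n - 1) ++ [-(n : ℤ)])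

/-- `(Q, L)` is the top factor `Q_{n-1}` of a parabolic factorization together with its
associated list `L_{n-1}`. -/
def QListTop (n : ℕ) (Q : Perm ℤ) (L : List ℤ) : Prop :=
  (Q = 1 ∧ L = []) ∨ (Q = sgen n (n - 1) ∧ L = [(n : ℤ)]) ∨
  (Q = sgen n n * sgen n (n - 1) ∧ L = [(n : ℤ), -(n : ℤ)]) ∨
  (Q = sgen n n ∧ L = [-(n : ℤ)])

/-- The partial product `Q_{n-1} Q_{n-2} ⋯ Q_k` of a parabolic factorization. -/
def prodQ (n : ℕ) (Q : ℕ → Perm ℤ) (k : ℕ) : Perm ℤ :=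
  (((List.range' k (n - k)).reverse).map Q).prod

/-- The letterwise extended Demazure action of the generator `s_i` (for `1 ≤ i ≤ n-1`) on an
arbitrary signed permutation: `s_i ⋆ u = s_i·u` if the value `i` occurs strictly to the left
of the value `i+1` in the unfolding of `u`, and `u` otherwise. -/
def demStep (n i : ℕ) (u : Perm ℤ) : Perm ℤ :=
  if dkey n (u⁻¹ (i : ℤ)) < dkey n (u⁻¹ ((i : ℤ) + 1)) then sgen n i * u else u

/-- The letterwise extended Demazure action of a word:
`(s_{a₁} ⋯ s_{a_k}) ⋆ u = s_{a₁} ⋆ (s_{a₂} ⋆ (⋯ (s_{a_k} ⋆ u)))`. -/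
def demWord (n : ℕ) (l : List ℕ) (u : Perm ℤ) : Perm ℤ := l.foldr (demStep n) u

/-- A member of the symmetric group on `±[n]`, viewed as a permutation of `ℤ`:
it fixes `0` and everything of absolute value `> n`. -/
def IsPermPM (n : ℕ) (w : Perm ℤ) : Prop := ∀ a : ℤ, a = 0 ∨ (n : ℤ) < |a| → w a = a

/-- The simple generators of the symmetric group on `±[n]` (type `A_{2n-1}`):
`agen n k` (for `1 ≤ k ≤ 2n-1`) transposes the order-adjacent elements of `±[n]`
with keys `k` and `k+1`. -/
def agen (n k : ℕ) : Perm ℤ := Equiv.swap (ofKey n (k : ℤ)) (ofKey n ((k : ℤ) + 1))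

/-- The Coxeter length of an element of the symmetric group on `±[n]`. -/
noncomputable def ALength (n : ℕ) (w : Perm ℤ) : ℕ :=
  sInf {k | ∃ l : List ℕ, (∀ i ∈ l, 1 ≤ i ∧ i ≤ 2 * n - 1) ∧ l.length = k ∧
    (l.map (agen n)).prod = w}

/-- `dem` is the Demazure product of the symmetric group on `±[n]`, viewed as a Coxeter
group of type `A_{2n-1}` with simple generators the transpositions of order-adjacent
elements of `±[n]`. -/
def IsDemazureA (n : ℕ) (dem : Perm ℤ → Perm ℤ → Perm ℤ) : Prop :=
  (∀ u v, IsPermPM n u → IsPermPM n v → IsPermPM n (dem u v)) ∧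
  (∀ u v w, IsPermPM n u → IsPermPM n v → IsPermPM n w →
      dem (dem u v) w = dem u (dem v w)) ∧
  (∀ u, IsPermPM n u → dem 1 u = u ∧ dem u 1 = u) ∧
  (∀ k, 1 ≤ k → k ≤ 2 * n - 1 → ∀ u, IsPermPM n u →
      (ALength n u < ALength n (agen n k * u) → dem (agen n k) u = agen n k * u) ∧
      (ALength n (agen n k * u) < ALength n u → dem (agen n k) u = u))


private lemma inPM_iff (n : ℕ) (a : ℤ) : inPM n a ↔ a ≠ 0 ∧ -(n:ℤ) ≤ a ∧ a ≤ n := by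
  simp [inPM, abs_le, and_assoc]

private lemma sgen_apply_lt (n i : ℕ) (hi : 1 ≤ i) (hin : i < n) (a : ℤ) :
    sgen n i a = if a = (i:ℤ) then (i:ℤ)+1 else if a = (i:ℤ)+1 then (i:ℤ)
      else if a = -(i:ℤ) then -((i:ℤ)+1) else if a = -((i:ℤ)+1) then -(i:ℤ) else a := by
  unfold sgen
  rw [if_neg hin.ne]
  simp only [Equiv.Perm.mul_apply, Equiv.swap_apply_def]
  split_ifs <;> omega

private lemma sgen_invol (n i : ℕ) (hi : 1 ≤ i) (hin : i < n) :
    sgen n i * sgen n i = 1 := by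
  ext a
  simp only [Equiv.Perm.mul_apply, Equiv.Perm.one_apply, sgen_apply_lt n i hi hin]
  split_ifs <;> omega

private lemma sgen_inv (n i : ℕ) (hi : 1 ≤ i) (hin : i < n) :
    (sgen n i)⁻¹ = sgen n i := by
  rw [inv_eq_iff_mul_eq_one]
  exact sgen_invol n i hi hin

private lemma sgen_neg (n i : ℕ) (hi : 1 ≤ i) (hin : i < n) (a : ℤ) :
    sgen n i (-a) = -(sgen n i a) := by
  simp only [sgen_apply_lt n i hi hin]
  split_ifs <;> omega

private lemma hswap_conj (σ : Perm ℤ) (hσ : ∀ a : ℤ, σ (-a) = -(σ a)) (t q : ℤ) :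
    σ * hswap t q * σ⁻¹ = hswap (σ t) (σ q) := by
  have hiff : σ t = -(σ q) ↔ t = -q := by
    rw [← hσ]
    exact ⟨fun h => σ.injective h, fun h => by rw [h]⟩
  unfold hswap
  by_cases h : t = -q
  · rw [if_pos h, if_pos (hiff.mpr h), Equiv.swap_apply_apply]
  · rw [if_neg h, if_neg (fun hc => h (hiff.mp hc)), ← hσ, ← hσ,
      Equiv.swap_apply_apply, Equiv.swap_apply_apply]
    group

private lemma find?_congr' {α : Type*} (p q : α → Bool) :
    ∀ (l : List α), (∀ a ∈ l, p a = q a) → l.find? p = l.find? q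
  | [], _ => rfl
  | a :: l, h => by
    simp only [List.find?]
    rw [h a List.mem_cons_self]
    cases q a with
    | true => rfl
    | false => exact find?_congr' p q l fun b hb => h b (List.mem_cons_of_mem a hb)

private lemma find?_map' {α β : Type*} (f : α → β) (p : β → Bool) :
    ∀ (l : List α), (l.map f).find? p = (l.find? (fun a => p (f a))).map f
  | [] => rfl
  | a :: l => by
    simp only [List.map_cons, List.find?]
    cases h : p (f a) with
    | true => rfl
    | false => exact find?_map' f p l

private lemma hop_eq_none {n : ℕ} {t : ℤ} {L : List ℤ} {w : Perm ℤ}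
    (h : L.reverse.find? (fun q => decide (HopStep n w t q)) = none) :
    hop n t L w = w := by
  rw [hop.eq_def]
  split
  · rfl
  · next q heq => rw [h] at heq; cases heq

private lemma hop_eq_some {n : ℕ} {t : ℤ} {L : List ℤ} {w : Perm ℤ} {q : ℤ}
    (h : L.reverse.find? (fun q => decide (HopStep n w t q)) = some q) :
    hop n t L w = hop n t L (hswap t q * w) := by
  rw [hop.eq_def]
  split
  · next heq => rw [h] at heq; cases heq
  · next q' heq =>
    rw [h] at heq
    cases heq
    rfl

private lemma sgen_cases (n i : ℕ) (hi : 1 ≤ i) (hin : i + 1 ≤ n) (q : ℤ)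
    (hq1 : q ≠ (i:ℤ)) (hq2 : q ≠ (i:ℤ)+1) :
    sgen n i q = q ∨ (q = -(i:ℤ) ∧ sgen n i q = -((i:ℤ)+1)) ∨
      (q = -((i:ℤ)+1) ∧ sgen n i q = -(i:ℤ)) := by
  rw [sgen_apply_lt n i hi (by omega)]
  split_ifs <;> omega

private lemma dkey_pos (n : ℕ) (a : ℤ) (h1 : 1 ≤ a) (h2 : a ≤ n) : dkey n a = a := by
  unfold dkey
  split_ifs <;> omega

private lemma dkey_neg (n : ℕ) (a : ℤ) (h1 : -(n:ℤ) ≤ a) (h2 : a ≤ -1) :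
    dkey n a = 2*n+1+a := by
  unfold dkey
  split_ifs <;> omega

private lemma hopstep_shift (n i : ℕ) (hi : 1 ≤ i) (hin : i + 1 ≤ n)
    (u : Perm ℤ) (q : ℤ) (hq : inPM n q) (hq1 : q ≠ (i:ℤ)) (hq2 : q ≠ (i:ℤ)+1) :
    HopStep n u (i:ℤ) q ↔ HopStep n (sgen n i * u) ((i:ℤ)+1) (sgen n i q) := by
  have hilt : i < n := by omega
  have hinv : (sgen n i)⁻¹ = sgen n i := sgen_inv n i hi hilt
  have hσσ : ∀ a : ℤ, sgen n i (sgen n i a) = a := fun a => by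
    have h := sgen_invol n i hi hilt
    calc sgen n i (sgen n i a) = (sgen n i * sgen n i) a := rfl
    _ = a := by rw [h]; rfl
  have e1 : (sgen n i * u)⁻¹ ((i:ℤ)+1) = u⁻¹ (i:ℤ) := by
    rw [mul_inv_rev, hinv, Equiv.Perm.mul_apply]
    congr 1
    rw [sgen_apply_lt n i hi hilt]
    split_ifs <;> omega
  have e2 : (sgen n i * u)⁻¹ (sgen n i q) = u⁻¹ q := by
    rw [mul_inv_rev, hinv, Equiv.Perm.mul_apply, hσσ]
  obtain ⟨hq0, hql, hqr⟩ := (inPM_iff n q).mp hq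
  have hcases := sgen_cases n i hi hin q hq1 hq2
  have key_i : dkey n (i:ℤ) = i := dkey_pos n i (by omega) (by omega)
  have key_i1 : dkey n ((i:ℤ)+1) = (i:ℤ)+1 := dkey_pos n ((i:ℤ)+1) (by omega) (by omega)
  have hpm : inPM n (sgen n i q) := by
    rw [inPM_iff]
    rcases hcases with h | ⟨hq', h⟩ | ⟨hq', h⟩ <;> rw [h] <;> omega
  have hdlt : dlt n (i:ℤ) q ↔ dlt n ((i:ℤ)+1) (sgen n i q) := by
    unfold dlt
    rw [key_i, key_i1]
    rcases hcases with h | ⟨hq', h⟩ | ⟨hq', h⟩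
    · rw [h]
      rcases le_or_gt 1 q with hc | hc
      · rw [dkey_pos n q hc hqr]; omega
      · rw [dkey_neg n q hql (by omega)]; omega
    · rw [h, hq', dkey_neg n (-(i:ℤ)) (by omega) (by omega),
        dkey_neg n (-((i:ℤ)+1)) (by omega) (by omega)]
      omega
    · rw [h, hq', dkey_neg n (-(i:ℤ)) (by omega) (by omega),
        dkey_neg n (-((i:ℤ)+1)) (by omega) (by omega)]
      omega
  unfold HopStep
  rw [e1, e2]
  constructor
  · rintro ⟨-, hd, h3, h4⟩
    exact ⟨hpm, hdlt.mp hd, h3, h4⟩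
  · rintro ⟨-, hd, h3, h4⟩
    exact ⟨hq, hdlt.mpr hd, h3, h4⟩

private theorem hop_shift_aux (n i : ℕ) (hi : 1 ≤ i) (hin : i + 1 ≤ n)
    (L : List ℤ) (hmem : ∀ a ∈ L, inPM n a) (h1 : (i : ℤ) ∉ L) (h2 : (i : ℤ) + 1 ∉ L)
    (u : Perm ℤ) :
    sgen n i * hop n (i : ℤ) L u
      = hop n ((i : ℤ) + 1) (L.map ⇑(sgen n i)) (sgen n i * u) := by
  have hilt : i < n := by omega
  have hfind : (L.map ⇑(sgen n i)).reverse.find?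
        (fun q => decide (HopStep n (sgen n i * u) ((i:ℤ)+1) q))
      = (L.reverse.find? (fun q => decide (HopStep n u (i:ℤ) q))).map ⇑(sgen n i) := by
    rw [← List.map_reverse, find?_map']
    congr 1
    apply find?_congr'
    intro a ha
    rw [List.mem_reverse] at ha
    have hiff : HopStep n u (i:ℤ) a ↔ HopStep n (sgen n i * u) ((i:ℤ)+1) (sgen n i a) :=
      hopstep_shift n i hi hin u a (hmem a ha)
        (fun h => h1 (h ▸ ha)) (fun h => h2 (h ▸ ha))
    simp only [decide_eq_decide]
    exact hiff.symm
  cases hF : L.reverse.find? (fun q => decide (HopStep n u (i:ℤ) q)) with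
  | none =>
    rw [hop_eq_none hF, hop_eq_none (by rw [hfind, hF]; rfl)]
  | some q =>
    have hq : HopStep n u (i:ℤ) q := by simpa using List.find?_some hF
    have hswc : hswap ((i:ℤ)+1) (sgen n i q) * (sgen n i * u)
        = sgen n i * (hswap (i:ℤ) q * u) := by
      have hσi : sgen n i (i:ℤ) = (i:ℤ)+1 := by
        rw [sgen_apply_lt n i hi hilt]
        split_ifs <;> omega
      rw [← hσi, ← hswap_conj (sgen n i) (sgen_neg n i hi hilt) (i:ℤ) q]
      group
    rw [hop_eq_some hF,
      hop_eq_some (L := L.map ⇑(sgen n i)) (w := sgen n i * u) (q := sgen n i q)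
        (by rw [hfind, hF]; rfl),
      hswc]
    exact hop_shift_aux n i hi hin L hmem h1 h2 (hswap (i:ℤ) q * u)
termination_by (2 * (n : ℤ) + 1 - dkey n (u⁻¹ (i:ℤ))).toNat
decreasing_by exact hop_measure n u (i:ℤ) q hq

/-- for `1 ≤ i ≤ n-1`, a list `L` of distinct elements of `±[n]` with
`i ∉ L` and `i+1 ∉ L`, and `w ∈ D_n`, `s_i · h_{i,L}(s_i·w) = h_{i+1, s_i(L)}(w)`. -/
theorem hop_conjugate_shift (n : ℕ) (hn : 2 ≤ n) (i : ℕ) (hi : 1 ≤ i) (hi' : i ≤ n - 1)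
    (L : List ℤ) (hnd : L.Nodup) (hmem : ∀ a ∈ L, inPM n a)
    (h1 : (i : ℤ) ∉ L) (h2 : (i : ℤ) + 1 ∉ L)
    (w : Perm ℤ) (hw : IsEvenSignedPerm n w) :
    sgen n i * hop n (i : ℤ) L (sgen n i * w)
      = hop n ((i : ℤ) + 1) (L.map ⇑(sgen n i)) w := by
  have hin : i + 1 ≤ n := by omega
  rw [hop_shift_aux n i hi hin L hmem h1 h2 (sgen n i * w)]
  congr 1
  rw [← mul_assoc, sgen_invol n i hi (by omega), one_mul]
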